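/- Let G be a connected cubic graph with a vertex partition {A, J} such that A induces a tree and the induced subgraph G[J] has exactly one edge, which is not a loop. Then G has a spanning tree whose cotree has exactly one component with an odd number of edges, and moreover this odd component has at least three edges. -/

import Mathlib

open SimpleGraph Finset

/-- The set of edges of `H` lying in the connected component `c` of `H`. -/
def cotreeCompEdges {V : Type*} (H : SimpleGraph V) (c : H.ConnectedComponent) :
    Set (Sym2 V) :=
  {e | e ∈ H.edgeSet ∧ ∀ v ∈ e, H.connectedComponentMk v = c}

/-- A walk in `T` whose support lies in `s` lifts to a walk in a graph `Gs` on `↥s` whose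
adjacency agrees with that of `T`. -/
private lemma lift_walk_aux {V : Type*} {T : SimpleGraph V} {s : Set V} {Gs : SimpleGraph s}
    (hadj : ∀ a b : s, T.Adj a b ↔ Gs.Adj a b) :
    ∀ {x y : V} (p : T.Walk x y) (hx : x ∈ s) (hy : y ∈ s),
      (∀ v ∈ p.support, v ∈ s) →
      ∃ q : Gs.Walk ⟨x, hx⟩ ⟨y, hy⟩,
        q.map ⟨Subtype.val, fun {a b} h => (hadj a b).mpr h⟩ = p := by
  intro x y p
  induction p with
  | nil =>
    intro hx hy _
    exact ⟨SimpleGraph.Walk.nil, rfl⟩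
  | @cons x b y h p ih =>
    intro hx hy hsup
    have hb : b ∈ s := hsup b (by simp)
    obtain ⟨q, hq⟩ := ih hb hy (fun v hv => hsup v (by simp [hv]))
    refine ⟨SimpleGraph.Walk.cons ((hadj ⟨x, hx⟩ ⟨b, hb⟩).mp h) q, ?_⟩
    simp [SimpleGraph.Walk.map_cons, hq]

/-- If a connected cubic graph has a vertex partition `{A, J}` with `A` inducing a tree
and `G[J]` having exactly one edge, then `G` has a spanning tree whose cotree has exactly
one odd component, and this odd component has at least three edges. -/
theorem stmt7 {V : Type*} [Fintype V] [DecidableEq V] (G : SimpleGraph V)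
    [DecidableRel G.Adj] (hconn : G.Connected) (hcubic : ∀ v, G.degree v = 3)
    (A J : Finset V) (hdisj : Disjoint A J) (hcover : A ∪ J = Finset.univ)
    (htree : (G.induce (↑A : Set V)).IsTree)
    (hnear : {e | e ∈ G.edgeSet ∧ ∀ v ∈ e, v ∈ (↑J : Set V)}.ncard = 1) :
    ∃ T : SimpleGraph V, T ≤ G ∧ T.IsTree ∧
      ∃ c : (G \ T).ConnectedComponent,
        Odd ((cotreeCompEdges (G \ T) c).ncard) ∧
        3 ≤ (cotreeCompEdges (G \ T) c).ncard ∧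
        ∀ c' : (G \ T).ConnectedComponent,
          Odd ((cotreeCompEdges (G \ T) c').ncard) → c' = c := by
  classical
  -- basic membership facts
  have hAmem : ∀ x : V, x ∈ A ∨ x ∈ J := by
    intro x
    have : x ∈ A ∪ J := by rw [hcover]; exact Finset.mem_univ x
    exact Finset.mem_union.mp this
  have hAJ : ∀ x : V, x ∈ A → x ∈ J → False := fun x hA hJ =>
    Finset.disjoint_left.mp hdisj hA hJ
  -- extract the unique J-J edge
  obtain ⟨e0, hS⟩ := Set.ncard_eq_one.mp hnear
  obtain ⟨u, v, rfl⟩ : ∃ u v, e0 = s(u, v) := Sym2.ind (fun a b => ⟨a, b, rfl⟩) e0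
  have hmem : s(u, v) ∈ {e | e ∈ G.edgeSet ∧ ∀ v ∈ e, v ∈ (↑J : Set V)} := by
    rw [hS]; exact rfl
  have hGuv : G.Adj u v := hmem.1
  have huJ : u ∈ J := hmem.2 u (Sym2.mem_mk_left u v)
  have hvJ : v ∈ J := hmem.2 v (Sym2.mem_mk_right u v)
  have hune : u ≠ v := hGuv.ne
  have hSJ : ∀ x y : V, G.Adj x y → x ∈ J → y ∈ J → s(x, y) = s(u, v) := by
    intro x y hxy hx hy
    have : s(x, y) ∈ {e | e ∈ G.edgeSet ∧ ∀ v ∈ e, v ∈ (↑J : Set V)} := by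
      refine ⟨hxy, ?_⟩
      intro z hz
      rcases Sym2.mem_iff.mp hz with rfl | rfl
      · exact hx
      · exact hy
    rw [hS] at this
    exact this
  -- every J vertex has a neighbor in A
  have hJA : ∀ w, w ∈ J → ∃ a, a ∈ A ∧ G.Adj w a := by
    intro w hw
    set y0 : V := if w = u then v else u with hy0
    have hJnbr : ∀ x, G.Adj w x → x ∈ J → x = y0 := by
      intro x hx hxJ
      have := hSJ w x hx hw hxJ
      rcases Sym2.eq_iff.mp this with ⟨rfl, rfl⟩ | ⟨rfl, rfl⟩
      · simp [hy0]
      · simp [hy0, if_neg (Ne.symm hune)]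
    have hnsub : ¬ G.neighborFinset w ⊆ {y0} := by
      intro hsub
      have h1 := Finset.card_le_card hsub
      rw [G.card_neighborFinset_eq_degree, hcubic w] at h1
      simp at h1
    obtain ⟨x, hx, hxy0⟩ := Finset.not_subset.mp hnsub
    have hadj : G.Adj w x := (SimpleGraph.mem_neighborFinset G w x).mp hx
    have hxA : x ∈ A := by
      rcases hAmem x with h | h
      · exact h
      · exact absurd (Finset.mem_singleton.mpr (hJnbr x hadj h)) hxy0
    exact ⟨x, hxA, hadj⟩
  -- choose, for each J vertex, a neighbor in A
  set f : V → V := fun w => if h : w ∈ J then (hJA w h).choose else w with hfdef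
  have hf : ∀ w, w ∈ J → f w ∈ A ∧ G.Adj w (f w) := by
    intro w hw
    have := (hJA w hw).choose_spec
    simp only [hfdef, dif_pos hw]
    exact this
  -- the spanning tree
  set T : SimpleGraph V :=
    { Adj := fun x y => G.Adj x y ∧
        ((x ∈ A ∧ y ∈ A) ∨ (x ∈ J ∧ y = f x) ∨ (y ∈ J ∧ x = f y)),
      symm := by
        refine ⟨fun x y h => ?_⟩
        exact ⟨h.1.symm, by tauto⟩,
      loopless := ⟨fun x h => G.loopless.irrefl x h.1⟩ } with hTdef
  have hTadj : ∀ x y : V, T.Adj x y ↔ G.Adj x y ∧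
      ((x ∈ A ∧ y ∈ A) ∨ (x ∈ J ∧ y = f x) ∨ (y ∈ J ∧ x = f y)) := fun _ _ => Iff.rfl
  have hTG : T ≤ G := fun {x y} h => h.1
  have hTnbr : ∀ w, w ∈ J → ∀ x, (T.Adj w x ↔ x = f w) := by
    intro w hw x
    constructor
    · rintro ⟨hG', h | h | h⟩
      · exact absurd hw (fun hww => hAJ w h.1 hww)
      · exact h.2
      · exact absurd hw (fun hww => hAJ w (h.2 ▸ (hf x h.1).1) hww)
    · rintro rfl
      exact ⟨(hf w hw).2, Or.inr (Or.inl ⟨hw, rfl⟩)⟩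
  have hTuv : ¬ T.Adj u v := by
    rintro ⟨_, h | h | h⟩
    · exact hAJ u h.1 huJ
    · exact hAJ v (h.2 ▸ (hf u h.1).1) hvJ
    · exact hAJ u (h.2 ▸ (hf v h.1).1) huJ
  -- adjacency in T between A-vertices agrees with the induced graph
  have hhomAdj : ∀ a b : (↑A : Set V), T.Adj ↑a ↑b ↔ (G.induce (↑A : Set V)).Adj a b := by
    intro a b
    constructor
    · intro h
      exact h.1
    · intro h
      exact ⟨h, Or.inl ⟨a.2, b.2⟩⟩
  -- T is connected
  have hTreach : ∀ x : V, ∃ a, a ∈ A ∧ T.Reachable x a := by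
    intro x
    rcases hAmem x with h | h
    · exact ⟨x, h, SimpleGraph.Reachable.refl x⟩
    · exact ⟨f x, (hf x h).1, ((hTnbr x h (f x)).mpr rfl).reachable⟩
  have hreachA : ∀ a b : V, a ∈ A → b ∈ A → T.Reachable a b := by
    intro a b ha hb
    have hra : (G.induce (↑A : Set V)).Reachable ⟨a, ha⟩ ⟨b, hb⟩ :=
      htree.isConnected.preconnected _ _
    have := hra.map (⟨Subtype.val, fun {p q} h => (hhomAdj p q).mpr h⟩ :
      (G.induce (↑A : Set V)) →g T)
    exact this
  have hTconn : T.Connected := by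
    rw [SimpleGraph.connected_iff]
    refine ⟨?_, hconn.nonempty⟩
    intro x y
    obtain ⟨a, ha, hxa⟩ := hTreach x
    obtain ⟨b, hb, hyb⟩ := hTreach y
    exact hxa.trans ((hreachA a b ha hb).trans hyb.symm)
  -- T is acyclic
  have hTacyc : T.IsAcyclic := by
    intro x p hp
    by_cases hsup : ∀ w ∈ p.support, w ∈ A
    · have hxA : x ∈ A := hsup x p.start_mem_support
      obtain ⟨q, hq⟩ := lift_walk_aux (fun a b => hhomAdj a b) p hxA hxA
        (fun w hw => hsup w hw)
      rw [← hq] at hp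
      exact htree.IsAcyclic q
        ((SimpleGraph.Walk.map_isCycle_iff_of_injective Subtype.val_injective).mp hp)
    · push_neg at hsup
      obtain ⟨w, hwsup, hwA⟩ := hsup
      have hwJ : w ∈ J := (hAmem w).resolve_left hwA
      have hq : (p.rotate w hwsup).IsCycle := hp.rotate hwsup
      set q := p.rotate w hwsup with hqdef
      rcases hq' : q with _ | ⟨hadj, q1⟩
      · rw [hq'] at hq
        exact SimpleGraph.Walk.IsCycle.not_of_nil hq
      · rename_i b
        rw [hq'] at hq
        obtain ⟨hq1path, hq1edge⟩ := (SimpleGraph.Walk.cons_isCycle_iff q1 hadj).mp hq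
        have hbf : b = f w := (hTnbr w hwJ b).mp hadj
        have hbw : w ≠ b := hadj.ne
        obtain ⟨c, hadj2, q2, hq2⟩ :=
          SimpleGraph.Walk.exists_eq_cons_of_ne hbw q1.reverse
        have hcf : c = f w := (hTnbr w hwJ c).mp hadj2
        have : s(w, c) ∈ q1.reverse.edges := by
          rw [hq2]; simp
        rw [SimpleGraph.Walk.edges_reverse, List.mem_reverse] at this
        rw [hcf, ← hbf] at this
        exact hq1edge this
  -- the cotree
  set H := G \ T with hHdef
  have hHadj : ∀ x y : V, H.Adj x y ↔ G.Adj x y ∧ ¬ T.Adj x y := fun x y =>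
    SimpleGraph.sdiff_adj G T x y
  have hHuv : H.Adj u v := (hHadj u v).mpr ⟨hGuv, hTuv⟩
  have hHG : ∀ x y : V, H.Adj x y → G.Adj x y := fun x y h => ((hHadj x y).mp h).1
  -- degrees in H of J-vertices
  have hHnbrJ : ∀ w, w ∈ J → H.neighborFinset w = G.neighborFinset w \ {f w} := by
    intro w hw
    ext x
    simp only [SimpleGraph.mem_neighborFinset, Finset.mem_sdiff, Finset.mem_singleton]
    rw [hHadj w x, hTnbr w hw x]
  have hHdeg : ∀ w, w ∈ J → (H.neighborFinset w).card = 2 := by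
    intro w hw
    rw [hHnbrJ w hw]
    rw [Finset.card_sdiff_of_subset (by
      simp only [Finset.singleton_subset_iff, SimpleGraph.mem_neighborFinset]
      exact (hf w hw).2)]
    rw [Finset.card_singleton, G.card_neighborFinset_eq_degree, hcubic w]
  -- edges of H at a vertex
  set B : V → Finset (Sym2 V) := fun w => H.edgeFinset.filter (fun e => w ∈ e) with hBdef
  have hBmem : ∀ w e, e ∈ B w ↔ e ∈ H.edgeSet ∧ w ∈ e := by
    intro w e
    simp [hBdef, Finset.mem_filter, SimpleGraph.mem_edgeFinset]
  have hB : ∀ w, B w = (H.neighborFinset w).image (fun x => s(w, x)) := by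
    intro w
    ext e
    rw [hBmem]
    induction e using Sym2.ind with
    | _ a b =>
      simp only [Finset.mem_image, SimpleGraph.mem_neighborFinset, SimpleGraph.mem_edgeSet,
        Sym2.mem_iff]
      constructor
      · rintro ⟨hab, rfl | rfl⟩
        · exact ⟨b, hab, rfl⟩
        · exact ⟨a, hab.symm, Sym2.eq_swap⟩
      · rintro ⟨x, hx, hxe⟩
        rcases Sym2.eq_iff.mp hxe with ⟨rfl, rfl⟩ | ⟨rfl, rfl⟩
        · exact ⟨hx, Or.inl rfl⟩
        · exact ⟨hx.symm, Or.inr rfl⟩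
  have hBcard : ∀ w, w ∈ J → (B w).card = 2 := by
    intro w hw
    rw [hB w, Finset.card_image_of_injective _ (fun x y h => Sym2.congr_right.mp h),
      hHdeg w hw]
  -- components
  have hcompAdj : ∀ x y : V, H.Adj x y → H.connectedComponentMk x = H.connectedComponentMk y :=
    fun x y h => SimpleGraph.ConnectedComponent.sound h.reachable
  have hnoAA : ∀ x y : V, H.Adj x y → (x ∈ J ∨ y ∈ J) := by
    intro x y h
    by_contra hcon
    push_neg at hcon
    have hxA : x ∈ A := (hAmem x).resolve_right hcon.1
    have hyA : y ∈ A := (hAmem y).resolve_right hcon.2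
    exact ((hHadj x y).mp h).2 ⟨((hHadj x y).mp h).1, Or.inl ⟨hxA, hyA⟩⟩
  set W : H.ConnectedComponent → Finset V :=
    fun c' => J.filter (fun w => H.connectedComponentMk w = c') with hWdef
  set Ec : H.ConnectedComponent → Finset (Sym2 V) :=
    fun c' => H.edgeFinset.filter (fun e => ∀ x ∈ e, H.connectedComponentMk x = c') with hEcdef
  have hcople : ∀ c', cotreeCompEdges H c' = ↑(Ec c') := by
    intro c'
    ext e
    simp [cotreeCompEdges, hEcdef, Finset.mem_filter, SimpleGraph.mem_edgeFinset]
  have hncard : ∀ c', (cotreeCompEdges H c').ncard = (Ec c').card := by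
    intro c'
    rw [hcople c', Set.ncard_coe_finset]
  -- the key decomposition
  have hEW : ∀ c', Ec c' = (W c').biUnion B := by
    intro c'
    ext e
    simp only [hEcdef, hWdef, Finset.mem_filter, Finset.mem_biUnion,
      SimpleGraph.mem_edgeFinset]
    constructor
    · rintro ⟨heH, hall⟩
      induction e using Sym2.ind with
      | _ a b =>
        have hadj : H.Adj a b := H.mem_edgeSet.mp heH
        rcases hnoAA a b hadj with hj | hj
        · exact ⟨a, ⟨hj, hall a (Sym2.mem_mk_left a b)⟩,
            (hBmem a _).mpr ⟨heH, Sym2.mem_mk_left a b⟩⟩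
        · exact ⟨b, ⟨hj, hall b (Sym2.mem_mk_right a b)⟩,
            (hBmem b _).mpr ⟨heH, Sym2.mem_mk_right a b⟩⟩
    · rintro ⟨w, ⟨hwJ, hwc⟩, hB'⟩
      obtain ⟨heH, hwe⟩ := (hBmem w e).mp hB'
      refine ⟨heH, ?_⟩
      induction e using Sym2.ind with
      | _ a b =>
        have hadj : H.Adj a b := H.mem_edgeSet.mp heH
        intro x hx
        have hab := hcompAdj a b hadj
        rcases Sym2.mem_iff.mp hx with rfl | rfl <;>
          rcases Sym2.mem_iff.mp hwe with rfl | rfl <;>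
            first
              | exact hwc
              | (rw [hab]; exact hwc)
              | (rw [← hab]; exact hwc)
  -- the even components
  have hEven : ∀ c', c' ≠ H.connectedComponentMk u → (Ec c').card = (W c').card * 2 := by
    intro c' hc'
    rw [hEW c']
    rw [Finset.card_biUnion ?_]
    · exact Finset.sum_const_nat (fun w hw => hBcard w (Finset.mem_filter.mp hw).1)
    · intro w hw w' hw' hne
      rw [Function.onFun, Finset.disjoint_left]
      intro e he he'
      obtain ⟨heH, hwe⟩ := (hBmem w e).mp he
      obtain ⟨_, hw'e⟩ := (hBmem w' e).mp he'
      have hee : e = s(w, w') := (Sym2.mem_and_mem_iff hne).mp ⟨hwe, hw'e⟩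
      have hadj : H.Adj w w' := H.mem_edgeSet.mp (hee ▸ heH)
      have hwJ := (Finset.mem_filter.mp hw).1
      have hw'J := (Finset.mem_filter.mp hw').1
      have := hSJ w w' (hHG w w' hadj) hwJ hw'J
      have hwuv : w = u ∨ w = v := by
        rcases Sym2.eq_iff.mp this with ⟨h1, _⟩ | ⟨h1, _⟩
        · exact Or.inl h1
        · exact Or.inr h1
      have hcomp := (Finset.mem_filter.mp hw).2
      have hvu : H.connectedComponentMk v = H.connectedComponentMk u := (hcompAdj u v hHuv).symm
      rcases hwuv with rfl | rfl
      · exact hc' hcomp.symm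
      · rw [hvu] at hcomp
        exact hc' hcomp.symm
  -- the odd component
  set c₀ := H.connectedComponentMk u with hc₀def
  have hvc₀ : H.connectedComponentMk v = c₀ := (hcompAdj u v hHuv).symm
  have huW : u ∈ W c₀ := Finset.mem_filter.mpr ⟨huJ, rfl⟩
  have hvW : v ∈ W c₀ := Finset.mem_filter.mpr ⟨hvJ, hvc₀⟩
  set B' : V → Finset (Sym2 V) := fun w => (B w).erase s(u, v) with hB'def
  have huvBu : s(u, v) ∈ B u := (hBmem u _).mpr ⟨H.mem_edgeSet.mpr hHuv,
    Sym2.mem_mk_left u v⟩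
  have huvBv : s(u, v) ∈ B v := (hBmem v _).mpr ⟨H.mem_edgeSet.mpr hHuv,
    Sym2.mem_mk_right u v⟩
  have hsplit : (W c₀).biUnion B = insert s(u, v) ((W c₀).biUnion B') := by
    ext e
    simp only [Finset.mem_biUnion, Finset.mem_insert, hB'def, Finset.mem_erase]
    constructor
    · rintro ⟨w, hw, he⟩
      by_cases hee : e = s(u, v)
      · exact Or.inl hee
      · exact Or.inr ⟨w, hw, hee, he⟩
    · rintro (rfl | ⟨w, hw, _, he⟩)
      · exact ⟨u, huW, huvBu⟩
      · exact ⟨w, hw, he⟩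
  have huvnot : s(u, v) ∉ (W c₀).biUnion B' := by
    simp only [Finset.mem_biUnion, hB'def, Finset.mem_erase]
    rintro ⟨w, _, hne, _⟩
    exact hne rfl
  have hdisjB' : ∀ w ∈ W c₀, ∀ w' ∈ W c₀, w ≠ w' → Disjoint (B' w) (B' w') := by
    intro w hw w' hw' hne
    rw [Finset.disjoint_left]
    intro e he he'
    simp only [hB'def, Finset.mem_erase] at he he'
    obtain ⟨heuv, heB⟩ := he
    obtain ⟨_, heB'⟩ := he'
    obtain ⟨heH, hwe⟩ := (hBmem w e).mp heB
    obtain ⟨_, hw'e⟩ := (hBmem w' e).mp heB'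
    have hee : e = s(w, w') := (Sym2.mem_and_mem_iff hne).mp ⟨hwe, hw'e⟩
    have hadj : H.Adj w w' := H.mem_edgeSet.mp (hee ▸ heH)
    have hwJ := (Finset.mem_filter.mp hw).1
    have hw'J := (Finset.mem_filter.mp hw').1
    exact heuv (hee.trans (hSJ w w' (hHG w w' hadj) hwJ hw'J))
  set W₀ : Finset V := ((W c₀).erase u).erase v with hW₀def
  have hvWe : v ∈ (W c₀).erase u := Finset.mem_erase.mpr ⟨hune.symm, hvW⟩
  have hWsplit : W c₀ = insert u (insert v W₀) := by
    rw [hW₀def, Finset.insert_erase hvWe, Finset.insert_erase huW]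
  have huniW₀ : u ∉ insert v W₀ := by
    simp only [Finset.mem_insert, hW₀def, Finset.mem_erase]
    rintro (rfl | ⟨h1, h2, _⟩)
    · exact hune rfl
    · exact h2 rfl
  have hvniW₀ : v ∉ W₀ := by
    simp only [hW₀def, Finset.mem_erase]
    rintro ⟨h1, _⟩
    exact h1 rfl
  have hB'u : (B' u).card = 1 := by
    simp only [hB'def]
    rw [Finset.card_erase_of_mem huvBu, hBcard u huJ]
  have hB'v : (B' v).card = 1 := by
    simp only [hB'def]
    rw [Finset.card_erase_of_mem huvBv, hBcard v hvJ]
  have hB'w : ∀ w ∈ W₀, (B' w).card = 2 := by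
    intro w hw
    have hwne : w ≠ u ∧ w ≠ v := by
      simp only [hW₀def, Finset.mem_erase] at hw
      exact ⟨hw.2.1, hw.1⟩
    have hwJ : w ∈ J := by
      have : w ∈ W c₀ := by
        simp only [hW₀def, Finset.mem_erase] at hw
        exact hw.2.2
      exact (Finset.mem_filter.mp this).1
    have : s(u, v) ∉ B w := by
      intro hmem'
      obtain ⟨_, hwuv⟩ := (hBmem w _).mp hmem'
      rcases Sym2.mem_iff.mp hwuv with rfl | rfl
      · exact hwne.1 rfl
      · exact hwne.2 rfl
    simp only [hB'def]
    rw [Finset.erase_eq_of_notMem this, hBcard w hwJ]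
  have hcardc₀ : (Ec c₀).card = 3 + 2 * W₀.card := by
    rw [hEW c₀, hsplit, Finset.card_insert_of_notMem huvnot]
    rw [Finset.card_biUnion (fun w hw w' hw' hne => hdisjB' w hw w' hw' hne)]
    rw [hWsplit, Finset.sum_insert huniW₀, Finset.sum_insert hvniW₀]
    rw [hB'u, hB'v]
    rw [Finset.sum_congr rfl (fun w hw => hB'w w hw)]
    rw [Finset.sum_const, smul_eq_mul]
    ring
  -- conclude
  refine ⟨T, hTG, ⟨hTconn, hTacyc⟩, c₀, ?_, ?_, ?_⟩
  · rw [hncard, hcardc₀]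
    exact ⟨1 + W₀.card, by ring⟩
  · rw [hncard, hcardc₀]
    omega
  · intro c' hodd
    by_contra hne
    rw [hncard, hEven c' (fun h => hne (h.trans hc₀def.symm))] at hodd
    rw [Nat.odd_iff] at hodd
    omega
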